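/- Let K be a field and let p ∈ K⟨x_1,...,x_n⟩ be a polynomial with zero constant term that vanishes identically on T_t(K) (i.e., is a polynomial identity of t×t upper triangular matrices). Then for any m ≥ t, the image p(T_m(K)) is contained in T_m(K)^{(t-1)}, the set of upper triangular matrices whose (i,j) entry vanishes whenever j - i ≤ t - 1. -/

import Mathlib

theorem stmt10 {K : Type*} [Field K] {n t m : ℕ} (ht : 1 ≤ t) (htm : t ≤ m)
    (p : FreeAlgebra K (Fin n))
    (h0 : (FreeAlgebra.lift K (fun _ : Fin n => (0 : K))) p = 0)
    (hid : ∀ u : Fin n → Matrix (Fin t) (Fin t) K,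
      (∀ i, (u i).BlockTriangular id) → (FreeAlgebra.lift K u) p = 0) :
    ∀ u : Fin n → Matrix (Fin m) (Fin m) K,
      (∀ i, (u i).BlockTriangular id) →
      ∀ i j : Fin m, (j : ℕ) - (i : ℕ) ≤ t - 1 →
        (FreeAlgebra.lift K u) p i j = 0 := by
  intro u hu i j hij
  -- the subalgebra of upper triangular matrices
  set S : Subalgebra K (Matrix (Fin m) (Fin m) K) :=
    { carrier := {A | A.BlockTriangular id}
      mul_mem' := fun hA hB => hA.mul hB
      add_mem' := fun hA hB => hA.add hB
      one_mem' := Matrix.blockTriangular_one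
      zero_mem' := Matrix.blockTriangular_zero
      algebraMap_mem' := fun r => by
        simpa [Matrix.algebraMap_eq_diagonal] using
          Matrix.blockTriangular_diagonal (b := id) (algebraMap K (Fin m → K) r) } with hS
  -- the window start
  set s : ℕ := min i (m - t) with hs
  have hst : s + t ≤ m := by omega
  have hsi : s ≤ (i : ℕ) := by omega
  -- embedding of the window
  have hlt : ∀ a : Fin t, s + (a : ℕ) < m := fun a => by omega
  set emb : Fin t ↪ Fin m :=
    ⟨fun a => ⟨s + a, hlt a⟩, by
      intro a b hab
      have : s + (a : ℕ) = s + (b : ℕ) := congrArg Fin.val hab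
      exact Fin.ext (by omega)⟩ with hemb
  have hembv : ∀ a : Fin t, ((emb a : Fin m) : ℕ) = s + a := fun a => rfl
  -- the window map, an algebra homomorphism on S
  have key : ∀ A B : Matrix (Fin m) (Fin m) K, A.BlockTriangular id →
      B.BlockTriangular id → ∀ a b : Fin t,
      (A * B) (emb a) (emb b) = ((A.submatrix emb emb) * (B.submatrix emb emb)) a b := by
    intro A B hA hB a b
    rw [Matrix.mul_apply, Matrix.mul_apply]
    rw [show (Finset.univ : Finset (Fin t)).sum
          (fun c => A.submatrix emb emb a c * B.submatrix emb emb c b)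
        = (Finset.univ.map emb).sum (fun k => A (emb a) k * B k (emb b)) by
      rw [Finset.sum_map]; rfl]
    refine (Finset.sum_subset (Finset.subset_univ _) ?_).symm
    intro k _ hk
    have hk' : (k : ℕ) < s ∨ s + t ≤ (k : ℕ) := by
      by_contra hcon
      push_neg at hcon
      apply hk
      simp only [Finset.mem_map, Finset.mem_univ, true_and]
      exact ⟨⟨(k : ℕ) - s, by omega⟩, Fin.ext (by simp [hembv]; omega)⟩
    rcases hk' with h | h
    · have : A (emb a) k = 0 :=
        hA (show (k : Fin m) < emb a from Fin.lt_iff_val_lt_val.mpr (by rw [hembv]; omega))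
      rw [this, zero_mul]
    · have : B k (emb b) = 0 :=
        hB (show emb b < k from Fin.lt_iff_val_lt_val.mpr (by rw [hembv]; omega))
      rw [this, mul_zero]
  set φ : S →ₐ[K] Matrix (Fin t) (Fin t) K :=
    { toFun := fun A => (A : Matrix (Fin m) (Fin m) K).submatrix emb emb
      map_one' := by
        ext a b
        simp [Matrix.one_apply, Fin.ext_iff, hembv]
      map_mul' := fun A B => by
        ext a b
        have := key A B A.2 B.2 a b
        simpa using this
      map_zero' := by ext a b; simp
      map_add' := fun A B => by ext a b; simp
      commutes' := fun r => by
        ext a b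
        simp [Matrix.algebraMap_eq_diagonal, Matrix.diagonal_apply, Fin.ext_iff, hembv] } with hφ
  set u' : Fin n → S := fun k => ⟨u k, hu k⟩ with hu'
  have hval : S.val.comp (FreeAlgebra.lift K u') = FreeAlgebra.lift K u := by
    apply FreeAlgebra.hom_ext
    funext k
    simp [hu']
  have hφcomp : φ.comp (FreeAlgebra.lift K u') =
      FreeAlgebra.lift K (fun k => φ (u' k)) := by
    apply FreeAlgebra.hom_ext
    funext k
    simp
  have htri : ∀ k, (φ (u' k)).BlockTriangular id := by
    intro k a b hab
    exact hu k (show id (emb b) < id (emb a) by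
      simp only [id_eq, Fin.lt_iff_val_lt_val, hembv]
      simp only [id_eq] at hab
      omega)
  have hzero : φ ((FreeAlgebra.lift K u') p) = 0 := by
    have := hid (fun k => φ (u' k)) htri
    calc φ ((FreeAlgebra.lift K u') p) = (φ.comp (FreeAlgebra.lift K u')) p := rfl
      _ = (FreeAlgebra.lift K (fun k => φ (u' k))) p := by rw [hφcomp]
      _ = 0 := this
  have hpu : (FreeAlgebra.lift K u) p = ((FreeAlgebra.lift K u') p : Matrix (Fin m) (Fin m) K) := by
    rw [← hval]; rfl
  by_cases hji : (j : ℕ) < (i : ℕ)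
  · -- lower triangular part: use triangularity of p(u)
    have := ((FreeAlgebra.lift K u') p).2
    rw [hpu]
    exact this (show (j : Fin m) < i from Fin.lt_iff_val_lt_val.mpr hji)
  · push_neg at hji
    have hsj : s ≤ (j : ℕ) := le_trans hsi hji
    have hia : (i : ℕ) - s < t := by omega
    have hjb : (j : ℕ) - s < t := by omega
    have := congrFun (congrFun hzero ⟨(i : ℕ) - s, hia⟩) ⟨(j : ℕ) - s, hjb⟩
    simp only [Matrix.zero_apply] at this
    rw [hpu]
    have heq : emb ⟨(i : ℕ) - s, hia⟩ = i ∧ emb ⟨(j : ℕ) - s, hjb⟩ = j :=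
      ⟨Fin.ext (show s + ((i : ℕ) - s) = (i : ℕ) by omega),
       Fin.ext (show s + ((j : ℕ) - s) = (j : ℕ) by omega)⟩
    calc ((FreeAlgebra.lift K u') p : Matrix (Fin m) (Fin m) K) i j
        = ((FreeAlgebra.lift K u') p : Matrix (Fin m) (Fin m) K)
            (emb ⟨(i : ℕ) - s, hia⟩) (emb ⟨(j : ℕ) - s, hjb⟩) := by rw [heq.1, heq.2]
      _ = 0 := this
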